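/- Let R ⊆ S_n be a top-k partial ranking with n − k ≥ 2, let σ be uniformly distributed on R, and let σ_0 ∈ R be fixed. Set X = d(σ, σ_0) and Y = d(A_R(σ), σ_0). Then Cov(X, Y) = −Var(X) < 0; in particular X and Y have strictly negative covariance. -/

import Mathlib

/-- The Kendall (tau) distance between two permutations of `Fin n`:
the number of pairs `(x, y)` with `x < y` on which `σ⁻¹` and `τ⁻¹`
disagree in relative order. -/
def kendallDist {n : ℕ} (σ τ : Equiv.Perm (Fin n)) : ℕ :=
  (Finset.univ.filter (fun p : Fin n × Fin n =>
    p.1 < p.2 ∧ ¬((σ⁻¹ p.1 < σ⁻¹ p.2) ↔ (τ⁻¹ p.1 < τ⁻¹ p.2)))).card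

/-- The top-`k` partial ranking determined by the items `a 0, …, a (k-1)`:
the set of full rankings (permutations) `σ` with `σ i = a i` for the first
`k` positions. -/
def topkFinset {n k : ℕ} (hk : k ≤ n) (a : Fin k → Fin n) :
    Finset (Equiv.Perm (Fin n)) :=
  Finset.univ.filter fun σ => ∀ i : Fin k, σ (Fin.castLE hk i) = a i

/-- The permutation of `Fin n` fixing the first `k` positions and reversing
the order of the remaining `n - k` positions. -/
def revAfter (n k : ℕ) : Equiv.Perm (Fin n) :=
  Function.Involutive.toPerm
    (fun p => if _h : (p : ℕ) < k then p
      else ⟨n + k - 1 - (p : ℕ), by have := p.isLt; omega⟩)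
    (by
      intro p
      have hp := p.isLt
      by_cases h : (p : ℕ) < k
      · simp [h]
      · have h2 : ¬ (n + k - 1 - (p : ℕ) < k) := by omega
        simp only [dif_neg h, dif_neg h2]
        ext
        simp
        omega)

/-- The antithetic permutation of `σ` relative to a top-`k` partial ranking:
the first `k` positions are unchanged and the remaining positions are
reversed, i.e. `A σ (k+j) = σ (n+1-j)` (in 1-indexed notation). -/
def antithetic (n k : ℕ) (σ : Equiv.Perm (Fin n)) : Equiv.Perm (Fin n) :=
  σ * revAfter n k

namespace AnticovAux

lemma revAfter_val (n k : ℕ) (p : Fin n) : ((revAfter n k p : Fin n) : ℕ)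
    = if (p:ℕ) < k then (p:ℕ) else n + k - 1 - (p:ℕ) := by
  simp only [revAfter, Function.Involutive.toPerm, Equiv.coe_fn_mk]
  split_ifs <;> rfl

lemma anti_inv_apply (n k : ℕ) (σ : Equiv.Perm (Fin n)) (x : Fin n) :
    (antithetic n k σ)⁻¹ x = revAfter n k (σ⁻¹ x) := by
  have h : (revAfter n k)⁻¹ = revAfter n k := rfl
  simp [antithetic, mul_inv_rev, h]

lemma inv_eq_of_lt {n k : ℕ} {hk : k ≤ n} {a : Fin k → Fin n}
    {σ τ : Equiv.Perm (Fin n)}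
    (hσ : σ ∈ topkFinset hk a) (hτ : τ ∈ topkFinset hk a)
    (x : Fin n) (h : ((σ⁻¹ x : Fin n) : ℕ) < k) : τ⁻¹ x = σ⁻¹ x := by
  simp only [topkFinset, Finset.mem_filter, Finset.mem_univ, true_and] at hσ hτ
  set i : Fin k := ⟨((σ⁻¹ x : Fin n) : ℕ), h⟩ with hi
  have hcast : Fin.castLE hk i = σ⁻¹ x := rfl
  have hx : x = a i := by
    rw [← hσ i, hcast, show σ (σ⁻¹ x) = x from Equiv.apply_symm_apply σ x]
  have : τ⁻¹ x = Fin.castLE hk i := by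
    rw [hx, ← hτ i, show τ⁻¹ (τ (Fin.castLE hk i)) = Fin.castLE hk i from Equiv.symm_apply_apply τ _]
  rw [this, hcast]

/-- Key pointwise identity: for `σ` in the ranking, `X σ + Y σ` is constant. -/
lemma key {n k : ℕ} {hk : k ≤ n} {a : Fin k → Fin n}
    {σ σ₀ : Equiv.Perm (Fin n)}
    (hσ : σ ∈ topkFinset hk a) (hσ₀ : σ₀ ∈ topkFinset hk a) :
    kendallDist σ σ₀ + kendallDist (antithetic n k σ) σ₀ =
      (Finset.univ.filter (fun p : Fin n × Fin n =>
        p.1 < p.2 ∧ k ≤ ((σ₀⁻¹ p.1 : Fin n) : ℕ) ∧ k ≤ ((σ₀⁻¹ p.2 : Fin n) : ℕ))).card := by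
  classical
  have main : ∀ p : Fin n × Fin n,
      ((p.1 < p.2 ∧ ¬((σ⁻¹ p.1 < σ⁻¹ p.2) ↔ (σ₀⁻¹ p.1 < σ₀⁻¹ p.2))) ∨
       (p.1 < p.2 ∧ ¬(((antithetic n k σ)⁻¹ p.1 < (antithetic n k σ)⁻¹ p.2) ↔
          (σ₀⁻¹ p.1 < σ₀⁻¹ p.2)))
        ↔ (p.1 < p.2 ∧ k ≤ ((σ₀⁻¹ p.1 : Fin n) : ℕ) ∧ k ≤ ((σ₀⁻¹ p.2 : Fin n) : ℕ)))
      ∧ ¬((p.1 < p.2 ∧ ¬((σ⁻¹ p.1 < σ⁻¹ p.2) ↔ (σ₀⁻¹ p.1 < σ₀⁻¹ p.2))) ∧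
         (p.1 < p.2 ∧ ¬(((antithetic n k σ)⁻¹ p.1 < (antithetic n k σ)⁻¹ p.2) ↔
          (σ₀⁻¹ p.1 < σ₀⁻¹ p.2)))) := by
    intro p
    by_cases hp : p.1 < p.2
    · have hne : p.1 ≠ p.2 := ne_of_lt hp
      have huv : σ⁻¹ p.1 ≠ σ⁻¹ p.2 := fun h => hne (σ⁻¹.injective h)
      have huv0 : σ₀⁻¹ p.1 ≠ σ₀⁻¹ p.2 := fun h => hne (σ₀⁻¹.injective h)
      have huvn : ((σ⁻¹ p.1 : Fin n) : ℕ) ≠ ((σ⁻¹ p.2 : Fin n) : ℕ) :=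
        fun h => huv (Fin.ext h)
      have huv0n : ((σ₀⁻¹ p.1 : Fin n) : ℕ) ≠ ((σ₀⁻¹ p.2 : Fin n) : ℕ) :=
        fun h => huv0 (Fin.ext h)
      have h1 : ((σ⁻¹ p.1 : Fin n) : ℕ) < k → ((σ₀⁻¹ p.1 : Fin n) : ℕ) = ((σ⁻¹ p.1 : Fin n) : ℕ) :=
        fun h => congrArg Fin.val (inv_eq_of_lt hσ hσ₀ p.1 h)
      have h1' : ((σ₀⁻¹ p.1 : Fin n) : ℕ) < k → ((σ⁻¹ p.1 : Fin n) : ℕ) = ((σ₀⁻¹ p.1 : Fin n) : ℕ) :=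
        fun h => congrArg Fin.val (inv_eq_of_lt hσ₀ hσ p.1 h)
      have h2 : ((σ⁻¹ p.2 : Fin n) : ℕ) < k → ((σ₀⁻¹ p.2 : Fin n) : ℕ) = ((σ⁻¹ p.2 : Fin n) : ℕ) :=
        fun h => congrArg Fin.val (inv_eq_of_lt hσ hσ₀ p.2 h)
      have h2' : ((σ₀⁻¹ p.2 : Fin n) : ℕ) < k → ((σ⁻¹ p.2 : Fin n) : ℕ) = ((σ₀⁻¹ p.2 : Fin n) : ℕ) :=
        fun h => congrArg Fin.val (inv_eq_of_lt hσ₀ hσ p.2 h)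
      have hb1 : ((σ⁻¹ p.1 : Fin n) : ℕ) < n := (σ⁻¹ p.1).isLt
      have hb2 : ((σ⁻¹ p.2 : Fin n) : ℕ) < n := (σ⁻¹ p.2).isLt
      have hr1 := revAfter_val n k (σ⁻¹ p.1)
      have hr2 := revAfter_val n k (σ⁻¹ p.2)
      rw [anti_inv_apply, anti_inv_apply]
      simp only [Fin.lt_def] at *
      split_ifs at hr1 hr2 <;> constructor <;> [skip; skip; skip; skip; skip; skip; skip; skip] <;> omega
    · constructor
      · constructor
        · rintro (⟨h, _⟩ | ⟨h, _⟩) <;> exact absurd h hp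
        · rintro ⟨h, _⟩; exact absurd h hp
      · rintro ⟨⟨h, _⟩, _⟩; exact absurd h hp
  unfold kendallDist
  rw [← Finset.card_union_of_disjoint]
  · congr 1
    rw [← Finset.filter_or]
    exact Finset.filter_congr fun p _ => (main p).1
  · rw [Finset.disjoint_left]
    intro p hpA hpB
    simp only [Finset.mem_filter, Finset.mem_univ, true_and] at hpA hpB
    exact (main p).2 ⟨hpA, hpB⟩

end AnticovAux

/-- Let `R` be a top-`k` partial ranking with `n − k ≥ 2`, let `σ` be uniform
on `R`, and let `σ₀ ∈ R`. With `X = d(σ, σ₀)` and `Y = d(A_R(σ), σ₀)`, we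
have `Cov(X, Y) = −Var(X) < 0`, where expectations are taken with respect to
the uniform distribution on `R`. -/
theorem antithetic_neg_cov {n k : ℕ} (hk : k ≤ n) (hk2 : k + 2 ≤ n)
    (a : Fin k → Fin n) (ha : Function.Injective a)
    (σ₀ : Equiv.Perm (Fin n)) (hσ₀ : σ₀ ∈ topkFinset hk a) :
    let R := topkFinset hk a
    let E : (Equiv.Perm (Fin n) → ℝ) → ℝ := fun f => (∑ σ ∈ R, f σ) / R.card
    let X : Equiv.Perm (Fin n) → ℝ := fun σ => (kendallDist σ σ₀ : ℝ)
    let Y : Equiv.Perm (Fin n) → ℝ :=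
      fun σ => (kendallDist (antithetic n k σ) σ₀ : ℝ)
    E (fun σ => X σ * Y σ) - E X * E Y
        = -(E (fun σ => X σ * X σ) - E X * E X) ∧
      E (fun σ => X σ * Y σ) - E X * E Y < 0 := by
  classical
  intro R E X Y
  set c : ℕ := (Finset.univ.filter (fun p : Fin n × Fin n =>
      p.1 < p.2 ∧ k ≤ ((σ₀⁻¹ p.1 : Fin n) : ℕ) ∧ k ≤ ((σ₀⁻¹ p.2 : Fin n) : ℕ))).card with hc
  have hkey : ∀ σ ∈ R, Y σ = (c : ℝ) - X σ := by
    intro σ hσ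
    have := AnticovAux.key hσ hσ₀
    have : ((kendallDist σ σ₀ : ℝ) + (kendallDist (antithetic n k σ) σ₀ : ℝ)) = (c : ℝ) := by
      rw [← Nat.cast_add, this]
    simp only [X, Y]
    linarith
  have hNnat : R.card ≠ 0 := Finset.card_ne_zero_of_mem hσ₀
  have hN : (R.card : ℝ) ≠ 0 := Nat.cast_ne_zero.2 hNnat
  have hNpos : (0 : ℝ) < R.card := by positivity
  set N : ℝ := (R.card : ℝ) with hNdef
  set s : ℝ := ∑ σ ∈ R, X σ with hs
  set q : ℝ := ∑ σ ∈ R, X σ * X σ with hq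
  have hEY : ∑ σ ∈ R, Y σ = (c : ℝ) * N - s := by
    rw [Finset.sum_congr rfl hkey, Finset.sum_sub_distrib, Finset.sum_const, nsmul_eq_mul]
    ring
  have hEXY : ∑ σ ∈ R, X σ * Y σ = (c : ℝ) * s - q := by
    rw [Finset.sum_congr rfl (fun σ hσ => by rw [hkey σ hσ])]
    simp only [show ∀ x : ℝ, x * ((c:ℝ) - x) = (c:ℝ) * x - x * x from fun x => by ring]
    rw [Finset.sum_sub_distrib, ← Finset.mul_sum]
  have hEq : E (fun σ => X σ * Y σ) - E X * E Y
      = -(E (fun σ => X σ * X σ) - E X * E X) := by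
    simp only [E, hEY, hEXY, ← hs, ← hq, ← hNdef]
    field_simp
    ring
  refine ⟨hEq, ?_⟩
  rw [hEq]
  -- it remains to show that the variance is positive
  set μ : ℝ := s / N with hμ
  have hvar : E (fun σ => X σ * X σ) - E X * E X
      = (∑ σ ∈ R, (X σ - μ) ^ 2) / N := by
    have hexp : ∑ σ ∈ R, (X σ - μ) ^ 2 = q - 2 * μ * s + N * μ ^ 2 := by
      simp only [show ∀ x : ℝ, (x - μ)^2 = x * x - 2 * μ * x + μ ^ 2 from fun x => by ring]
      rw [Finset.sum_add_distrib, Finset.sum_sub_distrib, ← Finset.mul_sum,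
        Finset.sum_const, nsmul_eq_mul, ← hs, ← hq, ← hNdef]
    rw [hexp]
    simp only [E, ← hs, ← hq, ← hNdef, hexp, hμ]
    field_simp
    ring
  rw [hvar]
  have hX0 : X σ₀ = 0 := by
    simp only [X, Nat.cast_eq_zero, kendallDist, Finset.card_eq_zero,
      Finset.filter_eq_empty_iff]
    intro p _
    tauto
  -- construct a second element of R with positive distance
  set i : Fin n := ⟨k, by omega⟩ with hi
  set j : Fin n := ⟨k + 1, by omega⟩ with hj
  have hij : i ≠ j := by simp [hi, hj, Fin.ext_iff]
  set σ₁ : Equiv.Perm (Fin n) := σ₀ * Equiv.swap i j with hσ₁def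
  have hσ₁R : σ₁ ∈ R := by
    simp only [R, topkFinset, Finset.mem_filter, Finset.mem_univ, true_and] at hσ₀ ⊢
    intro i'
    have h1 : Fin.castLE hk i' ≠ i := by
      intro hco
      have h := congrArg Fin.val hco
      rw [hi] at h
      simp [Fin.coe_castLE] at h
      have := i'.isLt; omega
    have h2 : Fin.castLE hk i' ≠ j := by
      intro hco
      have h := congrArg Fin.val hco
      rw [hj] at h
      simp [Fin.coe_castLE] at h
      have := i'.isLt; omega
    simp only [hσ₁def, Equiv.Perm.mul_apply, Equiv.swap_apply_of_ne_of_ne h1 h2]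
    exact hσ₀ i'
  have hσ₁inv1 : σ₁⁻¹ (σ₀ i) = j := by
    simp [hσ₁def, mul_inv_rev, Equiv.swap_apply_left]
  have hσ₁inv2 : σ₁⁻¹ (σ₀ j) = i := by
    simp [hσ₁def, mul_inv_rev, Equiv.swap_apply_right]
  have hbc : σ₀ i ≠ σ₀ j := fun h => hij (σ₀.injective h)
  have hijlt : i < j := by rw [Fin.lt_def, hi, hj]; simp
  have hkd : kendallDist σ₁ σ₀ ≠ 0 := by
    rw [kendallDist, Finset.card_ne_zero]
    by_cases hlt : σ₀ i < σ₀ j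
    · refine ⟨(σ₀ i, σ₀ j), ?_⟩
      simp only [Finset.mem_filter, Finset.mem_univ, true_and]
      refine ⟨hlt, ?_⟩
      rw [hσ₁inv1, hσ₁inv2, show σ₀⁻¹ (σ₀ i) = i from Equiv.symm_apply_apply σ₀ i, show σ₀⁻¹ (σ₀ j) = j from Equiv.symm_apply_apply σ₀ j]
      simp only [Fin.lt_def] at *
      omega
    · have hlt' : σ₀ j < σ₀ i := (hbc.symm).lt_or_gt.resolve_right hlt
      refine ⟨(σ₀ j, σ₀ i), ?_⟩
      simp only [Finset.mem_filter, Finset.mem_univ, true_and]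
      refine ⟨hlt', ?_⟩
      rw [hσ₁inv1, hσ₁inv2, show σ₀⁻¹ (σ₀ i) = i from Equiv.symm_apply_apply σ₀ i, show σ₀⁻¹ (σ₀ j) = j from Equiv.symm_apply_apply σ₀ j]
      simp only [Fin.lt_def] at *
      omega
  have hne01 : X σ₁ ≠ X σ₀ := by
    rw [hX0]
    exact Nat.cast_ne_zero.2 hkd
  have hwit : ∃ w ∈ R, X w ≠ μ := by
    by_cases h : X σ₀ = μ
    · exact ⟨σ₁, hσ₁R, fun hh => hne01 (hh.trans h.symm)⟩
    · exact ⟨σ₀, hσ₀, h⟩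
  obtain ⟨w, hwR, hw⟩ := hwit
  have hpos : 0 < ∑ σ ∈ R, (X σ - μ) ^ 2 :=
    Finset.sum_pos' (fun σ _ => sq_nonneg _)
      ⟨w, hwR, by rw [sq]; exact mul_self_pos.2 (sub_ne_zero.2 hw)⟩
  have : 0 < (∑ σ ∈ R, (X σ - μ) ^ 2) / N := div_pos hpos hNpos
  linarith
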